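/- Assume event 𝒜: every canonical hop-limited shortest path in G with at least √n hops contains an internal sampled vertex. Let G' be the skeleton graph on sampled vertex set V' where (u',v') ∈ E' iff there is a u'–v' path in G with at most √n hops, weighted by the √n-limited distance d_G^{(√n)}(u',v'). Then for every v' ∈ V' and every u' in the set S'^{(√n·k)}_G[k](v') of k closest sampled vertices to v' with respect to (√n·k)-limited distance in G, there exists a u'–v' path in G' with at most k edges and weight exactly d_G^{(√n k)}(u',v'). -/

import Mathlib

open scoped ENNReal

namespace Stmt6

variable {V : Type*}

/-- Endpoint of a walk starting at `u` with subsequent vertices given by the list. -/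
def last : V → List V → V
  | u, [] => u
  | _, x :: xs => last x xs

/-- Weight of a walk starting at `u` with subsequent vertices given by the list. -/
noncomputable def cost (w : V → V → ℝ≥0∞) : V → List V → ℝ≥0∞
  | _, [] => 0
  | u, x :: xs => w u x + cost w x xs

/-- `h`-hop-limited distance from `u` to `v` (non-edges have weight `⊤`). -/
noncomputable def hdist (w : V → V → ℝ≥0∞) (h : ℕ) (u v : V) : ℝ≥0∞ :=
  ⨅ p ∈ {p : List V | p.length ≤ h ∧ last u p = v}, cost w u p

/-- Shortest-path distance from `u` to `v`. -/
noncomputable def dist (w : V → V → ℝ≥0∞) (u v : V) : ℝ≥0∞ :=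
  ⨅ h : ℕ, hdist w h u v

/-- `S` is a set of (at most) `k` closest reachable vertices to `v` (excluding `v`),
with ties broken arbitrarily: members of `S` are reachable and distinct from `v`,
`|S| ≤ k`, every member is at least as close as every reachable non-member, and `S`
has exactly `k` elements unless it already contains all reachable vertices. -/
def IsKClosest [Fintype V] (w : V → V → ℝ≥0∞) (k : ℕ) (v : V) (S : Finset V) : Prop :=
  (∀ u ∈ S, u ≠ v ∧ dist w v u < ⊤) ∧ S.card ≤ k ∧
  (∀ y ∈ S, ∀ z, z ∉ S → z ≠ v → dist w v z < ⊤ → dist w v y ≤ dist w v z) ∧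
  (∀ z, z ∉ S → z ≠ v → dist w v z < ⊤ → S.card = k)

/-- Weight function of the union `G ∪ G^(k)` of the graph with the `k`-shortcut hopset:
hopset edges `(u,v)` (present when `u ∈ S v` or `v ∈ S u`) get weight `d_G(u,v)`. -/
noncomputable def unionW [Fintype V] [DecidableEq V] (w : V → V → ℝ≥0∞) (S : V → Finset V)
    (u v : V) : ℝ≥0∞ :=
  if u ∈ S v ∨ v ∈ S u then min (w u v) (dist w u v) else w u v


/-- `p` is the canonical `i`-hop-limited shortest `u`–`v` path: it has at most `i`
edges, ends at `v`, has minimum weight (equal to the `i`-limited distance), and among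
such paths it has the fewest edges and is lexicographically smallest with respect to
the vertex identifiers `ids` (comparing vertex sequences from the tail `u`). -/
def CanonicalPath (w : V → V → ℝ≥0∞) (ids : V → ℕ) (i : ℕ) (u v : V) (p : List V) : Prop :=
  p.length ≤ i ∧ last u p = v ∧ cost w u p = hdist w i u v ∧
  ∀ q : List V, q.length ≤ i → last u q = v → cost w u q = hdist w i u v →
    p.length ≤ q.length ∧
    (p.length = q.length → ¬ List.Lex (· < ·) ((u :: q).map ids) ((u :: p).map ids))

/-- Weight function of the skeleton graph `G'` on the sampled set `V'`: an edge
between two sampled vertices has weight equal to the `s`-hop-limited distance in `G`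
(`⊤`, i.e. no edge, if they are not connected by an `s`-hop-limited path). -/
noncomputable def skelW [DecidableEq V] (w : V → V → ℝ≥0∞) (V' : Finset V) (s : ℕ)
    (u v : V) : ℝ≥0∞ :=
  if u ∈ V' ∧ v ∈ V' then hdist w s u v else ⊤

/-- Minimum number of hops of an `i`-hop-limited minimum-weight `u`–`v` path. -/
noncomputable def minHops (w : V → V → ℝ≥0∞) (i : ℕ) (u v : V) : ℕ :=
  sInf {ℓ : ℕ | ∃ p : List V, p.length = ℓ ∧ ℓ ≤ i ∧ last u p = v ∧ cost w u p = hdist w i u v}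

/-- Strict comparison of vertices by distance, with ties broken by the tie-breaking
key `tie` (lexicographically). -/
def keyLt (d : V → ℝ≥0∞) (tie : V → ℕ × ℕ) (y z : V) : Prop :=
  Prod.Lex (· < ·) (Prod.Lex (· < ·) (· < ·)) (d y, tie y) (d z, tie z)

/-- `S` is the set of the `k` closest vertices of `dom` to `v` (excluding `v`) with
respect to the distance function `d`, with ties broken by the key `tie`: members are
reachable, `|S| ≤ k`, every member strictly precedes every reachable non-member, and
`S` has exactly `k` elements unless it contains all reachable vertices of `dom`. -/
def IsKNear (d : V → ℝ≥0∞) (tie : V → ℕ × ℕ) (dom : Finset V) (k : ℕ) (v : V)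
    (S : Finset V) : Prop :=
  S ⊆ dom ∧ v ∉ S ∧ S.card ≤ k ∧ (∀ y ∈ S, d y < ⊤) ∧
  (∀ y ∈ S, ∀ z ∈ dom, z ∉ S → z ≠ v → d z < ⊤ → keyLt d tie y z) ∧
  (∀ z ∈ dom, z ≠ v → d z < ⊤ → z ∉ S → S.card = k)

lemma last_append (u : V) (p q : List V) : last u (p ++ q) = last (last u p) q := by
  induction p generalizing u <;> simp [last, *]

lemma cost_append (w : V → V → ℝ≥0∞) (u : V) (p q : List V) :
    cost w u (p ++ q) = cost w u p + cost w (last u p) q := by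
  induction p generalizing u with
  | nil => simp [cost, last]
  | cons x xs ih => simp [cost, last, ih, add_assoc]

lemma hdist_le_cost (w : V → V → ℝ≥0∞) {h : ℕ} {u v : V} {p : List V}
    (hl : p.length ≤ h) (he : last u p = v) : hdist w h u v ≤ cost w u p :=
  iInf₂_le p ⟨hl, he⟩

lemma hdist_anti (w : V → V → ℝ≥0∞) {h h' : ℕ} (hh : h ≤ h') (u v : V) :
    hdist w h' u v ≤ hdist w h u v :=
  le_iInf₂ fun p hp => hdist_le_cost w (hp.1.trans hh) hp.2

lemma hdist_self (w : V → V → ℝ≥0∞) (h : ℕ) (u : V) : hdist w h u u = 0 :=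
  le_antisymm (hdist_le_cost w (p := []) (by simp) rfl) (zero_le)

lemma hdist_triangle (w : V → V → ℝ≥0∞) (h1 h2 : ℕ) (a x c : V) :
    hdist w (h1 + h2) a c ≤ hdist w h1 a x + hdist w h2 x c := by
  conv_rhs => rw [hdist, hdist]
  simp only [ENNReal.iInf_add]
  refine le_iInf fun p => le_iInf fun hp => ?_
  simp only [ENNReal.add_iInf]
  refine le_iInf fun q => le_iInf fun hq => ?_
  have := cost_append w a p q
  rw [hp.2] at this
  rw [← this]
  exact hdist_le_cost w (by simp [Nat.add_le_add hp.1 hq.1])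
    (by rw [last_append, hp.2, hq.2])

lemma lex_append_right {l1 l2 t : List ℕ} (h : List.Lex (· < ·) l1 l2)
    (hlen : l1.length = l2.length) : List.Lex (· < ·) (l1 ++ t) (l2 ++ t) := by
  induction h with
  | nil => simp at hlen
  | cons h ih => exact List.Lex.cons (ih (by simpa using hlen))
  | rel h => exact List.Lex.rel h

lemma lex_append_left {l1 l2 : List ℕ} (t : List ℕ) (h : List.Lex (· < ·) l1 l2) :
    List.Lex (· < ·) (t ++ l1) (t ++ l2) := by
  induction t with
  | nil => simpa
  | cons a t ih => exact List.Lex.cons ih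

lemma canonical_unique {w : V → V → ℝ≥0∞} {ids : V → ℕ} (hids : Function.Injective ids)
    {i : ℕ} {u v : V} {p q : List V} (hp : CanonicalPath w ids i u v p)
    (hq : CanonicalPath w ids i u v q) : p = q := by
  obtain ⟨hp1, hp2, hp3, hp4⟩ := hp
  obtain ⟨hq1, hq2, hq3, hq4⟩ := hq
  have h1 := hp4 q hq1 hq2 hq3
  have h2 := hq4 p hp1 hp2 hp3
  have hlen : p.length = q.length := le_antisymm h1.1 h2.1
  have := h1.2 hlen
  have := h2.2 hlen.symm
  have htri := (List.Lex.trichotomous (α := ℕ) (· < ·)).trichotomous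
    ((u :: p).map ids) ((u :: q).map ids)
  have heq : (u :: p).map ids = (u :: q).map ids := by tauto
  have : (u : V) :: p = u :: q := (List.map_injective_iff.2 hids) heq
  injection this

lemma last_take (u : V) (p : List V) (i : ℕ) (h : i ≤ p.length) :
    last u (p.take i) = (u :: p).get ⟨i, by simp; omega⟩ := by
  induction p generalizing u i with
  | nil => simp only [List.length_nil, Nat.le_zero] at h; subst h; simp [last]
  | cons x xs ih =>
    match i with
    | 0 => simp [last]
    | Nat.succ k =>
      simp only [List.take_succ_cons, last]
      exact ih x k (by simpa using h)

lemma canonical_nodup {w : V → V → ℝ≥0∞} {ids : V → ℕ} {i : ℕ} {u v : V} {p : List V}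
    (hp : CanonicalPath w ids i u v p) : (u :: p).Nodup := by
  by_contra hnd
  rw [List.nodup_iff_injective_get] at hnd
  simp only [Function.Injective] at hnd
  push_neg at hnd
  obtain ⟨a, b, hab, hne⟩ := hnd
  -- wlog a < b
  wlog hlt : (a : ℕ) < (b : ℕ) generalizing a b
  · have hne' : (a : ℕ) ≠ (b : ℕ) := fun h => hne (Fin.ext h)
    exact this b a hab.symm hne.symm (by omega)
  set i0 := (a : ℕ)
  set j0 := (b : ℕ)
  have hj0 : j0 ≤ p.length := by have := b.isLt; simp only [List.length_cons] at this; omega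
  have hi0 : i0 ≤ p.length := le_trans hlt.le hj0
  set q' := p.take i0 ++ p.drop j0 with hq'
  have hlast_i : last u (p.take i0) = (u :: p).get a := by
    rw [last_take u p i0 hi0]
  have hlast_j : last u (p.take j0) = (u :: p).get b := by
    rw [last_take u p j0 hj0]
  have hsplit : p = p.take j0 ++ p.drop j0 := (List.take_append_drop j0 p).symm
  have hcost_p : cost w u p = cost w u (p.take j0) + cost w ((u :: p).get b) (p.drop j0) := by
    conv_lhs => rw [hsplit]
    rw [cost_append, hlast_j]
  have htk : p.take j0 = p.take i0 ++ (p.drop i0).take (j0 - i0) := by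
    rw [← List.take_add]; congr 1; omega
  have hcost_tk : cost w u (p.take i0) ≤ cost w u (p.take j0) := by
    rw [htk, cost_append]; exact le_self_add
  have hcost_q' : cost w u q' ≤ cost w u p := by
    rw [hq', cost_append, hlast_i, hab, hcost_p]
    exact add_le_add_left hcost_tk _
  have hlast_q' : last u q' = v := by
    rw [hq', last_append, hlast_i, hab, ← hlast_j]
    rw [← last_append, ← hsplit]
    exact hp.2.1
  have hlen_q' : q'.length < p.length := by
    simp only [hq', List.length_append, List.length_take, List.length_drop]
    omega
  have hcost_eq : cost w u q' = hdist w i u v :=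
    le_antisymm (hcost_q'.trans_eq hp.2.2.1)
      (hdist_le_cost w (le_trans hlen_q'.le hp.1) hlast_q')
  have := (hp.2.2.2 q' (le_trans hlen_q'.le hp.1) hlast_q' hcost_eq).1
  omega

lemma canonical_split {w : V → V → ℝ≥0∞} {ids : V → ℕ} {ℓ : ℕ} {a b : V} {q1 q2 : List V}
    (hq : CanonicalPath w ids ℓ a b (q1 ++ q2)) (hfin : hdist w ℓ a b < ⊤) :
    CanonicalPath w ids q1.length a (last a q1) q1 ∧
    CanonicalPath w ids q2.length (last a q1) b q2 := by
  obtain ⟨hql, hqlast, hqcost, hqmin⟩ := hq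
  set x := last a q1 with hx
  have hcq : cost w a (q1 ++ q2) = cost w a q1 + cost w x q2 := cost_append w a q1 q2
  have hfin' : cost w a q1 + cost w x q2 < ⊤ := by rw [← hcq, hqcost]; exact hfin
  have hfin1 : cost w a q1 ≠ ⊤ := fun h => by rw [h] at hfin'; simp at hfin'
  have hfin2 : cost w x q2 ≠ ⊤ := fun h => by rw [h] at hfin'; simp at hfin'
  have hlen12 : q1.length + q2.length ≤ ℓ := by simpa using hql
  have hlast2 : last x q2 = b := by rw [hx, ← last_append]; exact hqlast
  -- for any competitor r for the prefix problem, cost q1 ≤ cost r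
  have key1 : ∀ r : List V, r.length ≤ q1.length → last a r = x →
      hdist w ℓ a b ≤ cost w a r + cost w x q2 := by
    intro r hr1 hr2
    have : hdist w ℓ a b ≤ cost w a (r ++ q2) :=
      hdist_le_cost w (by simp only [List.length_append]; omega)
        (by rw [last_append, hr2, hlast2])
    rwa [cost_append w a r q2, hr2] at this
  have key2 : ∀ r : List V, r.length ≤ q2.length → last x r = b →
      hdist w ℓ a b ≤ cost w a q1 + cost w x r := by
    intro r hr1 hr2
    have : hdist w ℓ a b ≤ cost w a (q1 ++ r) :=
      hdist_le_cost w (by simp only [List.length_append]; omega)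
        (by rw [last_append, ← hx, hr2])
    rwa [cost_append w a q1 r, ← hx] at this
  have hc1 : cost w a q1 = hdist w q1.length a x := by
    refine le_antisymm (le_iInf₂ fun r hr => ?_) (hdist_le_cost w le_rfl rfl)
    by_contra hcon
    push_neg at hcon
    have h1 := key1 r hr.1 hr.2
    have h2 : cost w a r + cost w x q2 < cost w a q1 + cost w x q2 :=
      ENNReal.add_lt_add_right hfin2 hcon
    rw [← hqcost, hcq] at h1
    exact absurd (lt_of_le_of_lt h1 h2) (lt_irrefl _)
  have hc2 : cost w x q2 = hdist w q2.length x b := by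
    refine le_antisymm (le_iInf₂ fun r hr => ?_) (hdist_le_cost w le_rfl hlast2)
    by_contra hcon
    push_neg at hcon
    have h1 := key2 r hr.1 hr.2
    have h2 : cost w a q1 + cost w x r < cost w a q1 + cost w x q2 :=
      ENNReal.add_lt_add_left hfin1 hcon
    rw [← hqcost, hcq] at h1
    exact absurd (lt_of_le_of_lt h1 h2) (lt_irrefl _)
  constructor
  · refine ⟨le_rfl, rfl, hc1, fun r hr1 hr2 hr3 => ?_⟩
    have hrc : cost w a (r ++ q2) = hdist w ℓ a b := by
      rw [cost_append, hr2, hr3, ← hc1, ← hcq, hqcost]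
    have hmain := hqmin (r ++ q2) (by simp only [List.length_append]; omega)
      (by rw [last_append, hr2, hlast2]) hrc
    constructor
    · have := hmain.1; simp only [List.length_append] at this; omega
    · intro hlen hlex
      have hlen' : q1.length + q2.length = r.length + q2.length := by omega
      refine hmain.2 (by simp only [List.length_append]; omega) ?_
      have : List.Lex (· < ·) ((a :: r).map ids ++ q2.map ids)
          ((a :: q1).map ids ++ q2.map ids) :=
        lex_append_right hlex (by simp [hlen])
      simpa using this
  · refine ⟨le_rfl, hlast2, hc2, fun r hr1 hr2 hr3 => ?_⟩
    have hrc : cost w a (q1 ++ r) = hdist w ℓ a b := by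
      rw [cost_append, ← hx, hr3, ← hc2, ← hcq, hqcost]
    have hmain := hqmin (q1 ++ r) (by simp only [List.length_append]; omega)
      (by rw [last_append, ← hx, hr2]) hrc
    constructor
    · have := hmain.1; simp only [List.length_append] at this; omega
    · intro hlen hlex
      refine hmain.2 (by simp only [List.length_append]; omega) ?_
      have hlex' : List.Lex (· < ·) (r.map ids) (q2.map ids) := by
        have := hlex
        rw [List.map_cons, List.map_cons, List.lex_cons_iff] at this
        exact this
      have : List.Lex (· < ·) ((a :: q1).map ids ++ r.map ids)
          ((a :: q1).map ids ++ q2.map ids) := lex_append_left _ hlex'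
      simpa using this

lemma last_eq_getLast (u : V) (l : List V) (h : l ≠ []) : last u l = l.getLast h := by
  induction l generalizing u with
  | nil => exact absurd rfl h
  | cons x xs ih =>
    by_cases hxs : xs = []
    · subst hxs; simp [last, List.getLast]
    · rw [List.getLast_cons hxs]
      exact ih x hxs

lemma split [DecidableEq V] {w : V → V → ℝ≥0∞} {ids : V → ℕ} (hids : Function.Injective ids)
    {s : ℕ} {P : ℕ → V → V → List V}
    (hP : ∀ ℓ u v, hdist w ℓ u v < ⊤ → CanonicalPath w ids ℓ u v (P ℓ u v))
    {V' : Finset V}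
    (hA : ∀ ℓ u v, hdist w ℓ u v < ⊤ → s ≤ (P ℓ u v).length →
      ∃ x ∈ (P ℓ u v).dropLast, x ∈ V') :
    ∀ m ℓ (a b : V), a ∈ V' → b ∈ V' → (hf : hdist w ℓ a b < ⊤) → (P ℓ a b).length ≤ m →
    ∃ p : List V, last a p = b ∧ cost (skelW w V' s) a p ≤ hdist w ℓ a b ∧
      (a :: p).Nodup ∧ ∀ x ∈ p.dropLast, x ∈ V' ∧ x ∈ (P ℓ a b).dropLast := by
  intro m
  induction m using Nat.strong_induction_on with
  | _ m IH =>
  intro ℓ a b ha hb hf hm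
  have hq := hP ℓ a b hf
  set q := P ℓ a b with hqdef
  by_cases hab : a = b
  · subst hab
    exact ⟨[], rfl, by simp [cost], by simp, by simp⟩
  have hqne : q ≠ [] := by
    intro h
    rw [h] at hq
    exact hab hq.2.1
  by_cases hsmall : q.length < s
  · refine ⟨[b], by simp [last], ?_, by simp [hab], by simp⟩
    have : cost (skelW w V' s) a [b] = skelW w V' s a b := by simp [cost]
    rw [this, skelW, if_pos ⟨ha, hb⟩]
    exact (hdist_le_cost w (le_of_lt hsmall) hq.2.1).trans_eq hq.2.2.1
  push_neg at hsmall
  obtain ⟨x, hxdl, hxV⟩ := hA ℓ a b hf hsmall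
  -- get the index of x in q.dropLast
  obtain ⟨⟨j, hjlt⟩, hjx⟩ := List.mem_iff_get.mp hxdl
  have hjlt' : j < q.length - 1 := by simpa using hjlt
  have hjq : q.dropLast.get ⟨j, hjlt⟩ = q.get ⟨j, by omega⟩ := by
    simp [List.getElem_dropLast]
  set q1 := q.take (j+1) with hq1
  set q2 := q.drop (j+1) with hq2
  have hquq : q = q1 ++ q2 := (List.take_append_drop (j+1) q).symm
  have hlen1 : q1.length = j + 1 := by
    rw [hq1, List.length_take]; omega
  have hlen2 : q2.length = q.length - (j+1) := by
    rw [hq2, List.length_drop]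
  have hx1 : last a q1 = x := by
    rw [hq1, last_take a q (j+1) (by omega)]
    rw [← hjx, hjq]
    simp
  have hcan := canonical_split (q1 := q1) (q2 := q2) (hquq ▸ hq) hf
  rw [hx1] at hcan
  obtain ⟨hcan1, hcan2⟩ := hcan
  have hcostq : cost w a q = cost w a q1 + cost w x q2 := by
    conv_lhs => rw [hquq]
    rw [cost_append, hx1]
  have hfin' : cost w a q1 + cost w x q2 < ⊤ := by
    rw [← hcostq, hq.2.2.1]; exact hf
  have hf1 : hdist w q1.length a x < ⊤ := by
    rw [← hcan1.2.2.1]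
    exact lt_of_le_of_lt le_self_add hfin'
  have hf2 : hdist w q2.length x b < ⊤ := by
    rw [← hcan2.2.2.1]
    exact lt_of_le_of_lt le_add_self hfin'
  have hP1 : P q1.length a x = q1 := canonical_unique hids (hP _ _ _ hf1) hcan1
  have hP2 : P q2.length x b = q2 := canonical_unique hids (hP _ _ _ hf2) hcan2
  have hm1 : q1.length < m := by omega
  have hm2 : q2.length < m := by omega
  obtain ⟨p1, hp1last, hp1cost, hp1nodup, hp1mem⟩ :=
    IH q1.length hm1 q1.length a x ha hxV hf1 (by rw [hP1])
  obtain ⟨p2, hp2last, hp2cost, hp2nodup, hp2mem⟩ :=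
    IH q2.length hm2 q2.length x b hxV hb hf2 (by rw [hP2])
  rw [hP1] at hp1mem
  rw [hP2] at hp2mem
  -- basic facts
  have hnd : (a :: q).Nodup := canonical_nodup hq
  have hndq : q.Nodup := hnd.of_cons
  have haq : a ∉ q := by
    have := hnd; rw [List.nodup_cons] at this; exact this.1
  have hq2ne : q2 ≠ [] := by
    intro h; rw [h] at hlen2; simp at hlen2; omega
  have hq1ne : q1 ≠ [] := by
    intro h; rw [h] at hlen1; simp at hlen1
  have hdLq : q.dropLast = q1 ++ q2.dropLast := by
    rw [hquq, List.dropLast_append_of_ne_nil hq2ne]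
  have hxq1 : x ∈ q1 := by
    rw [← hx1, last_eq_getLast a q1 hq1ne]
    exact List.getLast_mem hq1ne
  have hbq2 : b ∈ q2 := by
    have : last x q2 = b := hcan2.2.1
    rw [last_eq_getLast x q2 hq2ne] at this
    rw [← this]
    exact List.getLast_mem hq2ne
  have hdisj : List.Disjoint q1 q2 := by
    rw [hquq, List.nodup_append] at hndq
    exact fun a h1 h2 => hndq.2.2 a h1 a h2 rfl
  have hxb : x ≠ b := fun h => hdisj hxq1 (h ▸ hbq2)
  have hp2ne : p2 ≠ [] := by
    intro h; rw [h] at hp2last; exact hxb hp2last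
  have hp1sub : ∀ z ∈ a :: p1, z = a ∨ z ∈ q1 := by
    intro z hz
    rcases List.mem_cons.mp hz with h | h
    · exact Or.inl h
    · right
      by_cases hp1e : p1 = []
      · rw [hp1e] at h; simp at h
      have : p1 = p1.dropLast ++ [x] := by
        conv_lhs => rw [← List.dropLast_append_getLast hp1e]
        rw [← last_eq_getLast a p1 hp1e, hp1last]
      rw [this] at h
      rcases List.mem_append.mp h with h | h
      · exact (List.dropLast_sublist q1).subset ((hp1mem z h).2)
      · simp at h; subst h; exact hxq1
  have hp2sub : ∀ z ∈ p2, z ∈ q2 := by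
    intro z hz
    have : p2 = p2.dropLast ++ [b] := by
      conv_lhs => rw [← List.dropLast_append_getLast hp2ne]
      rw [← last_eq_getLast x p2 hp2ne, hp2last]
    rw [this] at hz
    rcases List.mem_append.mp hz with h | h
    · exact (List.dropLast_sublist q2).subset ((hp2mem z h).2)
    · simp at h; subst h; exact hbq2
  refine ⟨p1 ++ p2, ?_, ?_, ?_, ?_⟩
  · rw [last_append, hp1last, hp2last]
  · rw [cost_append, hp1last]
    calc cost (skelW w V' s) a p1 + cost (skelW w V' s) x p2
        ≤ hdist w q1.length a x + hdist w q2.length x b := add_le_add hp1cost hp2cost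
      _ = cost w a q1 + cost w x q2 := by rw [hcan1.2.2.1, hcan2.2.2.1]
      _ = hdist w ℓ a b := by rw [← hcostq, hq.2.2.1]
  · have : a :: (p1 ++ p2) = (a :: p1) ++ p2 := by simp
    rw [this, List.nodup_append]
    refine ⟨hp1nodup, hp2nodup.of_cons, ?_⟩
    intro z hz1 z' hz2 hzz; subst hzz
    have hz2' := hp2sub z hz2
    rcases hp1sub z hz1 with h | h
    · subst h
      exact haq (hquq ▸ List.mem_append.mpr (Or.inr hz2'))
    · exact hdisj h hz2'
  · intro z hz
    rw [List.dropLast_append_of_ne_nil hp2ne] at hz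
    rcases List.mem_append.mp hz with h | h
    · by_cases hp1e : p1 = []
      · rw [hp1e] at h; simp at h
      have : p1 = p1.dropLast ++ [x] := by
        conv_lhs => rw [← List.dropLast_append_getLast hp1e]
        rw [← last_eq_getLast a p1 hp1e, hp1last]
      rw [this] at h
      rcases List.mem_append.mp h with h | h
      · obtain ⟨hzV, hzq⟩ := hp1mem z h
        refine ⟨hzV, ?_⟩
        rw [hdLq]
        exact List.mem_append.mpr (Or.inl ((List.dropLast_sublist q1).subset hzq))
      · simp at h; subst h
        exact ⟨hxV, hxdl⟩
    · obtain ⟨hzV, hzq⟩ := hp2mem z h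
      refine ⟨hzV, ?_⟩
      rw [hdLq]
      exact List.mem_append.mpr (Or.inr hzq)

lemma cost_skel_ge {V : Type*} [DecidableEq V] (w : V → V → ℝ≥0∞) (V' : Finset V) (s : ℕ) :
    ∀ (p : List V) (a : V), hdist w (s * p.length) a (last a p) ≤ cost (skelW w V' s) a p := by
  intro p
  induction p with
  | nil => intro a; exact (hdist_le_cost w (p := []) (by simp) rfl).trans (by simp [cost])
  | cons x xs ih =>
    intro a
    have h1 : s * (x :: xs).length = s + s * xs.length := by
      simp [List.length_cons]; ring
    rw [h1]
    refine le_trans (hdist_triangle w s (s * xs.length) a x (last a (x :: xs))) ?_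
    show _ ≤ cost (skelW w V' s) a (x :: xs)
    rw [show cost (skelW w V' s) a (x :: xs) = skelW w V' s a x + cost (skelW w V' s) x xs
      from rfl]
    refine add_le_add ?_ (ih x)
    rw [skelW]
    split
    · exact le_rfl
    · exact le_top

lemma minHops_canonical {w : V → V → ℝ≥0∞} {ids : V → ℕ} {i : ℕ} {u v : V} {p : List V}
    (hp : CanonicalPath w ids i u v p) : minHops w i u v = p.length := by
  refine le_antisymm (Nat.sInf_le ⟨p, rfl, hp.1, hp.2.1, hp.2.2.1⟩) ?_
  refine le_csInf ⟨p.length, p, rfl, hp.1, hp.2.1, hp.2.2.1⟩ ?_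
  rintro ℓ' ⟨r, hr0, hr1, hr2, hr3⟩
  subst hr0
  exact (hp.2.2.2 r hr1 hr2 hr3).1

lemma keyLt_asymm {d : V → ℝ≥0∞} {tie : V → ℕ × ℕ} {y z : V}
    (h1 : keyLt d tie y z) (h2 : keyLt d tie z y) : False := by
  rw [keyLt, Prod.lex_def] at h1 h2
  simp only [Prod.lex_def] at h1 h2
  obtain h1 | ⟨e1, h1⟩ := h1 <;> obtain h2 | ⟨e2, h2⟩ := h2
  · exact absurd h2 (lt_asymm h1)
  · exact absurd h1 (e2 ▸ lt_irrefl _)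
  · exact absurd h2 (e1 ▸ lt_irrefl _)
  · obtain h1 | ⟨f1, h1⟩ := h1 <;> obtain h2 | ⟨f2, h2⟩ := h2 <;> omega


/-- Under event 𝒜 (every canonical hop-limited shortest path with at least `√n` hops
has an internal sampled vertex), for every sampled `v'` and every `u'` among the `k`
closest sampled vertices to `v'` under `(√n·k)`-limited distance in `G`, there is a
`v'`–`u'` path in the skeleton graph with at most `k` edges and weight exactly
`d_G^{(√n·k)}(v',u')`. -/
theorem skeleton_path_exists [Fintype V] [DecidableEq V]
    (w : V → V → ℝ≥0∞) (hsymm : ∀ u v, w u v = w v u)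
    (n : ℕ) (hn : n = Fintype.card V)
    (ids : V → ℕ) (hids : Function.Injective ids)
    (P : ℕ → V → V → List V)
    (hP : ∀ i u v, hdist w i u v < ⊤ → CanonicalPath w ids i u v (P i u v))
    (V' : Finset V)
    (hA : ∀ i u v, hdist w i u v < ⊤ → Nat.sqrt n ≤ (P i u v).length →
      ∃ x ∈ (P i u v).dropLast, x ∈ V')
    (k : ℕ) (hk : 1 ≤ k)
    (v' : V) (hv' : v' ∈ V')
    (S : Finset V)
    (hS : IsKNear (hdist w (Nat.sqrt n * k) v')
      (fun x => (minHops w (Nat.sqrt n * k) v' x, ids x)) V' k v' S)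
    (u' : V) (hu' : u' ∈ S) :
    ∃ p : List V, p.length ≤ k ∧ last v' p = u' ∧
      cost (skelW w V' (Nat.sqrt n)) v' p = hdist w (Nat.sqrt n * k) v' u' := by
  set s := Nat.sqrt n with hs
  set i := s * k with hi
  obtain ⟨hsub, hvS, hcard, hfin, hlt, -⟩ := hS
  have hfu : hdist w i v' u' < ⊤ := hfin u' hu'
  have hqc := hP i v' u' hfu
  set q := P i v' u' with hqdef
  have hnd : (v' :: q).Nodup := canonical_nodup hqc
  -- every sampled vertex in the interior of the canonical path belongs to S
  have hmemS : ∀ x ∈ q.dropLast, x ∈ V' → x ∈ S := by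
    intro x hxdl hxV
    by_contra hxS
    have hxq : x ∈ q := (List.dropLast_sublist q).subset hxdl
    have hxv : x ≠ v' := fun h => (List.nodup_cons.mp hnd).1 (h ▸ hxq)
    obtain ⟨⟨j, hjlt⟩, hjx⟩ := List.mem_iff_get.mp hxdl
    have hjlt' : j < q.length - 1 := by simpa using hjlt
    set q1 := q.take (j+1) with hq1
    set q2 := q.drop (j+1) with hq2
    have hquq : q = q1 ++ q2 := (List.take_append_drop (j+1) q).symm
    have hlen1 : q1.length = j + 1 := by rw [hq1, List.length_take]; omega
    have hlen2 : q2.length = q.length - (j+1) := by rw [hq2, List.length_drop]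
    have hx1 : last v' q1 = x := by
      rw [hq1, last_take v' q (j+1) (by omega)]
      rw [← hjx]
      simp [List.getElem_dropLast]
    have hcan := canonical_split (q1 := q1) (q2 := q2) (hquq ▸ hqc) hfu
    rw [hx1] at hcan
    obtain ⟨hcan1, hcan2⟩ := hcan
    have hqlen : q.length ≤ i := hqc.1
    have hcostq : cost w v' q = cost w v' q1 + cost w x q2 := by
      conv_lhs => rw [hquq]
      rw [cost_append, hx1]
    have hDfin : cost w v' q1 + cost w x q2 < ⊤ := by
      rw [← hcostq, hqc.2.2.1]; exact hfu
    have hq1fin : cost w v' q1 < ⊤ := lt_of_le_of_lt le_self_add hDfin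
    have hdx_le : hdist w i v' x ≤ cost w v' q1 :=
      hdist_le_cost w (by omega) hx1
    have hdx_fin : hdist w i v' x < ⊤ := lt_of_le_of_lt hdx_le hq1fin
    have hcost1_le : cost w v' q1 ≤ hdist w i v' u' := by
      rw [← hqc.2.2.1, hcostq]; exact le_self_add
    have hkey : keyLt (hdist w i v')
        (fun x => (minHops w i v' x, ids x)) x u' := by
      rcases lt_or_eq_of_le (hdx_le.trans hcost1_le) with hde | hde
      · exact Prod.Lex.left _ _ hde
      · have hcq1 : cost w v' q1 = hdist w i v' x :=
          le_antisymm (hde ▸ hcost1_le) hdx_le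
        have hmx : minHops w i v' x ≤ j + 1 :=
          Nat.sInf_le ⟨q1, hlen1, by omega, hx1, hcq1⟩
        have hmu : minHops w i v' u' = q.length := minHops_canonical hqc
        have hml : minHops w i v' x < minHops w i v' u' := by omega
        have : Prod.Lex (· < ·) (Prod.Lex (· < ·) (· < ·))
            (hdist w i v' u', (minHops w i v' x, ids x))
            (hdist w i v' u', (minHops w i v' u', ids u')) :=
          Prod.Lex.right _ (Prod.Lex.left _ _ hml)
        rw [keyLt]
        rw [hde]
        exact this
    exact keyLt_asymm hkey (hlt u' hu' x hxV hxS hxv hdx_fin)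
  -- build the skeleton path
  obtain ⟨p, hplast, hpcost, hpnodup, hpmem⟩ :=
    split hids hP hA q.length i v' u' hv' (hsub hu') hfu le_rfl
  have hpne : p ≠ [] := by
    intro h
    rw [h] at hplast
    simp only [last] at hplast
    exact hvS (hplast ▸ hu')
  have hpdec : p = p.dropLast ++ [u'] := by
    conv_lhs => rw [← List.dropLast_append_getLast hpne]
    rw [← last_eq_getLast v' p hpne, hplast]
  have hndp : p.Nodup := hpnodup.of_cons
  have hu'dl : u' ∉ p.dropLast := by
    intro h
    rw [hpdec, List.nodup_append] at hndp
    exact hndp.2.2 u' h u' (by simp) rfl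
  have hdlS : ∀ z ∈ p.dropLast, z ∈ S.erase u' := by
    intro z hz
    obtain ⟨hzV, hzq⟩ := hpmem z hz
    refine Finset.mem_erase.mpr ⟨fun h => hu'dl (h ▸ hz), hmemS z hzq hzV⟩
  have hdlnd : p.dropLast.Nodup := hndp.sublist (List.dropLast_sublist p)
  have hcardle : p.dropLast.length ≤ k - 1 := by
    have h1 : p.dropLast.toFinset.card = p.dropLast.length :=
      List.toFinset_card_of_nodup hdlnd
    have h2 : p.dropLast.toFinset ⊆ S.erase u' := fun z hz =>
      hdlS z (List.mem_toFinset.mp hz)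
    have h3 := Finset.card_le_card h2
    have h4 : (S.erase u').card = S.card - 1 := Finset.card_erase_of_mem hu'
    omega
  have hplen : p.length ≤ k := by
    have : p.length = p.dropLast.length + 1 := by
      conv_lhs => rw [hpdec]
      simp
    omega
  refine ⟨p, hplen, hplast, le_antisymm hpcost ?_⟩
  have hge := cost_skel_ge w V' s p v'
  rw [hplast] at hge
  refine le_trans (hdist_anti w ?_ v' u') hge
  exact Nat.mul_le_mul_left s hplen


end Stmt6
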